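/- Home bias: Let Y = {y*, y₁, …, y_N} with N ≥ 2, and let binary utilities satisfy u(y*) = 1 and u(y_i) = 0 for all i. Fix δ ∈ (0,1), ε ∈ (0, δ/N), and define two distributions: q_d with q_d(y*) = 1−δ and q_d(y_i) = δ/N for all i; and q_f with q_f(y*) = 1−δ, q_f(y₁) = δ − (N−1)ε, and q_f(y_i) = ε for i = 2,…,N. For λ > 0 and μ ∈ [0, 1/λ), set κ = 1/λ − μ, β = 1/(1−λμ), and for a ∈ {d,f} define v(a) = −κ·log( e^{−1/κ}·(1−δ)^β + Σ_{i=1}^N q_a(y_i)^β ). Then v(d) = v(f) when μ = 0, and v(d) > v(f) for every μ ∈ (0, 1/λ). -/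

import Mathlib

open Finset Real

/-- Home bias: with identical reference downside mass δ, the domestic asset
(uniform tail) and the foreign asset (concentrated tail) have equal values
when μ = 0, and the domestic value is strictly larger for any μ ∈ (0, 1/λ). -/
theorem stmt11 (N : ℕ) (hN : 2 ≤ N)
    (δ ε lam mu : ℝ)
    (hδ0 : 0 < δ) (hδ1 : δ < 1) (hε : 0 < ε) (hεδ : ε < δ / N)
    (hlam : 0 < lam) (hmu0 : 0 ≤ mu) (hmu : mu < 1 / lam)
    (kappa beta : ℝ) (hk : kappa = 1 / lam - mu) (hb : beta = 1 / (1 - lam * mu))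
    (qf : Fin N → ℝ)
    (hqf : ∀ i, qf i = if i = (⟨0, by omega⟩ : Fin N) then δ - (N - 1) * ε else ε)
    (vd vf : ℝ)
    (hvd : vd = -kappa * Real.log
      (Real.exp (-1 / kappa) * (1 - δ) ^ beta + ∑ _i : Fin N, (δ / N) ^ beta))
    (hvf : vf = -kappa * Real.log
      (Real.exp (-1 / kappa) * (1 - δ) ^ beta + ∑ i : Fin N, qf i ^ beta)) :
    (mu = 0 → vd = vf) ∧ (0 < mu → vf < vd) := by
  have hN2 : (2:ℝ) ≤ (N:ℝ) := by exact_mod_cast hN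
  have hNpos : (0:ℝ) < N := by linarith
  have hεN : ε * N < δ := by rwa [lt_div_iff₀ hNpos] at hεδ
  set A : ℝ := δ - ((N:ℝ) - 1) * ε with hAdef
  have hmlt : δ / N < A := by
    rw [hAdef, lt_sub_iff_add_lt, div_add' _ _ _ (ne_of_gt hNpos), div_lt_iff₀ hNpos]
    nlinarith
  have hA0 : 0 < A := lt_trans (lt_trans hε hεδ) hmlt
  have hsum_f : ∀ b : ℝ, ∑ i : Fin N, qf i ^ b = A ^ b + ((N:ℝ) - 1) * ε ^ b := by
    intro b
    have h1 : ∀ i : Fin N,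
        qf i ^ b = (if i = (⟨0, by omega⟩ : Fin N) then A ^ b - ε ^ b else 0) + ε ^ b := by
      intro i; rw [hqf]
      by_cases h : i = (⟨0, by omega⟩ : Fin N) <;> simp [h, hAdef]
    rw [Finset.sum_congr rfl (fun i _ => h1 i), Finset.sum_add_distrib,
        Finset.sum_ite_eq' Finset.univ _ (fun _ => A ^ b - ε ^ b), Finset.sum_const]
    simp [Finset.card_univ]
    ring
  have hsum_d : ∀ b : ℝ, ∑ _i : Fin N, (δ / N) ^ b = (N:ℝ) * (δ / N) ^ b := by
    intro b
    rw [Finset.sum_const, Finset.card_univ, Fintype.card_fin, nsmul_eq_mul]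
  have hkpos : 0 < kappa := by rw [hk]; linarith
  constructor
  · intro hmu0'
    have hbeta1 : beta = 1 := by rw [hb, hmu0']; simp
    rw [hvd, hvf, hbeta1, hsum_f 1, hsum_d 1]
    simp only [Real.rpow_one]
    congr 1
    rw [hAdef]
    field_simp
    ring
  · intro hmupos
    have hlm : lam * mu < 1 := by
      have := (lt_div_iff₀ hlam).mp hmu
      linarith
    have hlm0 : 0 < lam * mu := mul_pos hlam hmupos
    have hβ1 : 1 < beta := by
      rw [hb]; exact one_lt_one_div (by linarith) (by linarith)
    have sc := strictConvexOn_rpow hβ1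
    have ha : (0:ℝ) < 1 / (N:ℝ) := by positivity
    have hb' : (0:ℝ) < ((N:ℝ) - 1) / N := div_pos (by linarith) hNpos
    have hab : 1 / (N:ℝ) + ((N:ℝ) - 1) / N = 1 := by field_simp; ring
    have hjens := sc.2 (Set.mem_Ici.mpr hA0.le) (Set.mem_Ici.mpr hε.le)
      (lt_trans hεδ hmlt).ne' ha hb' hab
    have hcomb : (1 / (N:ℝ)) • A + (((N:ℝ) - 1) / N) • ε = δ / N := by
      simp only [smul_eq_mul, hAdef]
      field_simp
      ring
    rw [hcomb, smul_eq_mul, smul_eq_mul] at hjens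
    have hkey : (N:ℝ) * (δ / N) ^ beta < A ^ beta + ((N:ℝ) - 1) * ε ^ beta := by
      have := mul_lt_mul_of_pos_left hjens hNpos
      calc (N:ℝ) * (δ / N) ^ beta
          < (N:ℝ) * (1 / N * A ^ beta + ((N:ℝ) - 1) / N * ε ^ beta) := this
        _ = A ^ beta + ((N:ℝ) - 1) * ε ^ beta := by field_simp
    set E : ℝ := Real.exp (-1 / kappa) * (1 - δ) ^ beta with hE
    have hEpos : 0 < E := by
      apply mul_pos (Real.exp_pos _)
      exact Real.rpow_pos_of_pos (by linarith) _
    have hdpos : 0 < δ / N := div_pos hδ0 hNpos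
    have hxpos : 0 < E + ∑ _i : Fin N, (δ / N) ^ beta := by
      rw [hsum_d]
      have : 0 < (δ / N) ^ beta := Real.rpow_pos_of_pos hdpos _
      positivity
    have hlt : E + ∑ _i : Fin N, (δ / N) ^ beta < E + ∑ i : Fin N, qf i ^ beta := by
      rw [hsum_d, hsum_f]; linarith
    have hlog := Real.log_lt_log hxpos hlt
    rw [hvd, hvf]
    have := mul_lt_mul_of_pos_left hlog hkpos
    nlinarith [this]
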